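/- Fix a depth i with 0 ≤ i ≤ n and m ∈ ℕ. Then the m-th trellis numerator decomposes at depth i as θ^(m)(T) = Σ_{P : A → B} f(P)^m · λ(P) = Σ_{v : depth(v) = i} Σ_{l=0}^{m} C(m,l) · α^(l)(v) · β^(m−l)(v), where C(m,l) is the binomial coefficient. -/

import Mathlib

open Finset

/-- `IsPath einit efin u v P` means the list of edges `P = e₁⋯e_L` is a path from
vertex `u` to vertex `v`: `init e₁ = u`, `fin e_L = v` and `fin e_j = init e_{j+1}`;
the empty list is a path from every vertex to itself. -/
def IsPath {V E : Type*} (einit efin : E → V) : V → V → List E → Prop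
  | u, v, [] => u = v
  | u, v, e :: es => einit e = u ∧ IsPath einit efin (efin e) v es

/-- The λ-label of a path: the product of the λ-labels of its edges. -/
noncomputable def pathLam {E : Type*} (lam : E → ℝ) (P : List E) : ℝ :=
  (P.map lam).prod

/-- The value `f(P)` of a path: the sum of the values `g(e)` of its edges. -/
noncomputable def pathF {E : Type*} (g : E → ℝ) (P : List E) : ℝ :=
  (P.map g).sum

/-- The `m`-th forward numerator `α^(m)(v) = Σ_{P : A → v} f(P)^m · λ(P)`. -/
noncomputable def alphaNum {V E : Type*} (lam g : E → ℝ)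
    (paths : V → V → Finset (List E)) (A : V) (m : ℕ) (v : V) : ℝ :=
  ∑ P ∈ paths A v, pathF g P ^ m * pathLam lam P

/-- The `m`-th backward numerator `β^(m)(v) = Σ_{P : v → B} f(P)^m · λ(P)`. -/
noncomputable def betaNum {V E : Type*} (lam g : E → ℝ)
    (paths : V → V → Finset (List E)) (B : V) (m : ℕ) (v : V) : ℝ :=
  ∑ P ∈ paths v B, pathF g P ^ m * pathLam lam P

/-- **Decomposition of the trellis numerator at a depth** `0 ≤ i ≤ n`:
`θ^(m)(T) = Σ_{P : A → B} f(P)^m · λ(P)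
  = Σ_{v : depth(v) = i} Σ_{l=0}^{m} C(m,l) · α^(l)(v) · β^(m−l)(v)`. -/
lemma isPath_append {V E : Type*} (einit efin : E → V) :
    ∀ (P1 : List E) {u v w : V} (P2 : List E), IsPath einit efin u v P1 →
    IsPath einit efin v w P2 → IsPath einit efin u w (P1 ++ P2)
  | [], u, v, w, P2, h1, h2 => by cases h1; simpa using h2
  | e :: es, u, v, w, P2, h1, h2 => by
      obtain ⟨h0, h1⟩ := h1
      exact ⟨h0, isPath_append einit efin es P2 h1 h2⟩

lemma isPath_split {V E : Type*} (einit efin : E → V) :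
    ∀ (P1 : List E) {u w : V} (P2 : List E),
    IsPath einit efin u w (P1 ++ P2) →
    ∃ v, IsPath einit efin u v P1 ∧ IsPath einit efin v w P2
  | [], u, w, P2, h => ⟨u, rfl, h⟩
  | e :: es, u, w, P2, h => by
      obtain ⟨h0, h1⟩ := h
      obtain ⟨v, hv1, hv2⟩ := isPath_split einit efin es P2 h1
      exact ⟨v, ⟨h0, hv1⟩, hv2⟩

lemma isPath_unique {V E : Type*} (einit efin : E → V) :
    ∀ (P : List E) {u v v' : V}, IsPath einit efin u v P →
    IsPath einit efin u v' P → v = v'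
  | [], _, _, _, h, h' => h.symm.trans h'
  | _ :: es, _, _, _, h, h' => isPath_unique einit efin es h.2 h'.2

lemma depth_isPath {V E : Type*} (einit efin : E → V) (depth : V → ℕ)
    (hdepth : ∀ e, depth (efin e) = depth (einit e) + 1) :
    ∀ (P : List E) {u v : V}, IsPath einit efin u v P →
    depth v = depth u + P.length
  | [], u, v, h => by cases h; simp
  | e :: es, u, v, h => by
      have := depth_isPath einit efin depth hdepth es h.2
      rw [this, hdepth, h.1]
      simp; omega

theorem theta_decomposition {V E : Type*} [Fintype V] [Fintype E]
    (einit efin : E → V) (depth : V → ℕ) (n : ℕ)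
    (hdepth : ∀ e, depth (efin e) = depth (einit e) + 1)
    (A : V) (hA : depth A = 0) (B : V) (hB : depth B = n)
    (lam g : E → ℝ)
    (paths : V → V → Finset (List E))
    (hpaths : ∀ u v P, P ∈ paths u v ↔ IsPath einit efin u v P)
    (i : ℕ) (hi : i ≤ n) (m : ℕ) :
    ∑ P ∈ paths A B, pathF g P ^ m * pathLam lam P =
      ∑ v ∈ Finset.univ.filter (fun v => depth v = i),
        ∑ l ∈ Finset.range (m + 1),
          (m.choose l : ℝ) * alphaNum lam g paths A l v *
            betaNum lam g paths B (m - l) v := by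
  classical
  -- length facts
  have hlen : ∀ (P : List E) (u v : V), IsPath einit efin u v P →
      P.length = depth v - depth u := by
    intro P u v h
    have := depth_isPath einit efin depth hdepth P h
    omega
  -- rewrite RHS as a triple sum over concatenations
  have rhs : (∑ v ∈ Finset.univ.filter (fun v => depth v = i),
        ∑ l ∈ Finset.range (m + 1),
          (m.choose l : ℝ) * alphaNum lam g paths A l v *
            betaNum lam g paths B (m - l) v)
      = ∑ v ∈ Finset.univ.filter (fun v => depth v = i),
          ∑ P1 ∈ paths A v, ∑ P2 ∈ paths v B,
            pathF g (P1 ++ P2) ^ m * pathLam lam (P1 ++ P2) := by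
    refine sum_congr rfl fun v _ => Eq.symm ?_
    calc (∑ P1 ∈ paths A v, ∑ P2 ∈ paths v B,
            pathF g (P1 ++ P2) ^ m * pathLam lam (P1 ++ P2))
        = ∑ P1 ∈ paths A v, ∑ P2 ∈ paths v B, ∑ l ∈ Finset.range (m + 1),
            (m.choose l : ℝ) * (pathF g P1 ^ l * pathLam lam P1) *
              (pathF g P2 ^ (m - l) * pathLam lam P2) := by
          refine sum_congr rfl fun P1 _ => sum_congr rfl fun P2 _ => ?_
          have hF : pathF g (P1 ++ P2) = pathF g P1 + pathF g P2 := by simp [pathF]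
          have hL : pathLam lam (P1 ++ P2) = pathLam lam P1 * pathLam lam P2 := by
            simp [pathLam]
          rw [hF, hL, add_pow, Finset.sum_mul]
          exact sum_congr rfl fun l _ => by ring
      _ = ∑ P1 ∈ paths A v, ∑ l ∈ Finset.range (m + 1), ∑ P2 ∈ paths v B,
            (m.choose l : ℝ) * (pathF g P1 ^ l * pathLam lam P1) *
              (pathF g P2 ^ (m - l) * pathLam lam P2) :=
          sum_congr rfl fun P1 _ => Finset.sum_comm
      _ = ∑ l ∈ Finset.range (m + 1), ∑ P1 ∈ paths A v, ∑ P2 ∈ paths v B,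
            (m.choose l : ℝ) * (pathF g P1 ^ l * pathLam lam P1) *
              (pathF g P2 ^ (m - l) * pathLam lam P2) := Finset.sum_comm
      _ = ∑ l ∈ Finset.range (m + 1),
            (m.choose l : ℝ) * alphaNum lam g paths A l v *
              betaNum lam g paths B (m - l) v := by
          refine sum_congr rfl fun l _ => ?_
          simp only [alphaNum, betaNum]
          rw [mul_assoc, Finset.sum_mul_sum, Finset.mul_sum]
          refine sum_congr rfl fun P1 _ => ?_
          rw [Finset.mul_sum]
          exact sum_congr rfl fun P2 _ => by ring
  rw [rhs]
  have rhs2 : (∑ v ∈ Finset.univ.filter (fun v => depth v = i),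
          ∑ P1 ∈ paths A v, ∑ P2 ∈ paths v B,
            pathF g (P1 ++ P2) ^ m * pathLam lam (P1 ++ P2))
      = ∑ p ∈ (Finset.univ.filter (fun v => depth v = i)).sigma
          (fun v => paths A v ×ˢ paths v B),
          pathF g (p.2.1 ++ p.2.2) ^ m * pathLam lam (p.2.1 ++ p.2.2) := by
    rw [Finset.sum_sigma]
    refine sum_congr rfl fun v _ => ?_
    exact (Finset.sum_product' (f := fun P1 P2 =>
      pathF g (P1 ++ P2) ^ m * pathLam lam (P1 ++ P2)) _ _).symm
  rw [rhs2]
  have hPsplit : ∀ P ∈ paths A B,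
      ∃ v, IsPath einit efin A v (P.take i) ∧ IsPath einit efin v B (P.drop i) := by
    intro P hP
    refine isPath_split einit efin _ _ ?_
    rw [List.take_append_drop]
    exact (hpaths A B P).1 hP
  refine Finset.sum_bij' (fun P hP => ⟨(hPsplit P hP).choose, (P.take i, P.drop i)⟩)
    (fun p _ => p.2.1 ++ p.2.2) ?_ ?_ ?_ ?_ ?_
  · -- j maps into sigma set
    intro P hP
    obtain ⟨h1, h2⟩ := (hPsplit P hP).choose_spec
    have hlenP : P.length = n := by
      have := hlen P A B ((hpaths A B P).1 hP); omega
    have htake : (P.take i).length = i := by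
      rw [List.length_take]; omega
    have hd : depth (hPsplit P hP).choose = i := by
      have := depth_isPath einit efin depth hdepth _ h1
      rw [htake] at this; omega
    simp only [Finset.mem_sigma, Finset.mem_filter, Finset.mem_univ, true_and,
      Finset.mem_product]
    exact ⟨hd, (hpaths _ _ _).2 h1, (hpaths _ _ _).2 h2⟩
  · -- i maps into paths A B
    rintro ⟨v, P1, P2⟩ hp
    simp only [Finset.mem_sigma, Finset.mem_filter, Finset.mem_univ, true_and,
      Finset.mem_product] at hp
    exact (hpaths A B _).2 (isPath_append einit efin P1 P2
      ((hpaths A v P1).1 hp.2.1) ((hpaths v B P2).1 hp.2.2))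
  · -- left inverse : starting from P
    intro P hP
    simp [List.take_append_drop]
  · -- right inverse : starting from p
    rintro ⟨v, P1, P2⟩ hp
    simp only [Finset.mem_sigma, Finset.mem_filter, Finset.mem_univ, true_and,
      Finset.mem_product] at hp
    obtain ⟨hv, h1, h2⟩ := hp
    have hp1 : IsPath einit efin A v P1 := (hpaths A v P1).1 h1
    have hp2 : IsPath einit efin v B P2 := (hpaths v B P2).1 h2
    have hl1 : P1.length = i := by
      have := depth_isPath einit efin depth hdepth P1 hp1; omega
    have htake : (P1 ++ P2).take i = P1 := by rw [← hl1]; exact List.take_left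
    have hdrop : (P1 ++ P2).drop i = P2 := by rw [← hl1]; exact List.drop_left
    have hmem : P1 ++ P2 ∈ paths A B := (hpaths A B _).2
      (isPath_append einit efin P1 P2 hp1 hp2)
    have hveq : ∀ (h : P1 ++ P2 ∈ paths A B), (hPsplit (P1 ++ P2) h).choose = v := by
      intro h
      have hc := (hPsplit (P1 ++ P2) h).choose_spec.1
      have hp1' : IsPath einit efin A v ((P1 ++ P2).take i) := by
        rw [htake]; exact hp1
      exact isPath_unique einit efin _ hc hp1'
    refine Sigma.ext (hveq hmem) (heq_of_eq ?_)
    show ((P1 ++ P2).take i, (P1 ++ P2).drop i) = (P1, P2)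
    rw [htake, hdrop]
  · -- values agree
    intro P hP
    simp [List.take_append_drop]
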